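/- Commutator exponential estimate: in any C*-algebra, for A self-adjoint and C arbitrary, ‖[e^{iA}, C]‖ ≤ ‖[A, C]‖. -/

import Mathlib

/-- Commutator exponential estimate: in any C*-algebra, for `A` self-adjoint and `C`
arbitrary, `‖[e^{iA}, C]‖ ≤ ‖[A, C]‖`. -/
theorem stmt5 {𝔄 : Type*} [NormedRing 𝔄] [StarRing 𝔄] [CStarRing 𝔄]
    [NormedAlgebra ℂ 𝔄] [CompleteSpace 𝔄] [StarModule ℂ 𝔄]
    (A C : 𝔄) (hA : IsSelfAdjoint A) :
    ‖NormedSpace.exp (Complex.I • A) * C - C * NormedSpace.exp (Complex.I • A)‖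
      ≤ ‖A * C - C * A‖ := by
  rcases subsingleton_or_nontrivial 𝔄 with hsub | hnt
  · simp [Subsingleton.elim (NormedSpace.exp (Complex.I • A) * C -
      C * NormedSpace.exp (Complex.I • A)) (A * C - C * A)]
  letI : NormedAlgebra ℚ 𝔄 := NormedAlgebra.restrictScalars ℚ ℂ 𝔄
  open NormedSpace Complex in
  set X : 𝔄 := Complex.I • A with hX
  set D : 𝔄 := X * C - C * X with hD
  set u : ℝ → 𝔄 := fun t => exp (t • X) with hu
  set v : ℝ → 𝔄 := fun t => exp (t • (-X)) with hv
  -- norms of u, v are one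
  have hmemu : ∀ t : ℝ, u t ∈ unitary 𝔄 := by
    intro t
    have h1 : t • X = Complex.I • ((t : ℂ) • A) := by
      rw [hX, smul_comm, RCLike.real_smul_eq_coe_smul (K := ℂ)]
      norm_cast
    have h2 : IsSelfAdjoint ((t : ℂ) • A) := by
      refine IsSelfAdjoint.smul ?_ hA
      simp [IsSelfAdjoint, RCLike.star_def]
    rw [hu]
    simp only
    rw [h1]
    exact exp_mem_unitary_of_mem_skewAdjoint (h2.smul_mem_skewAdjoint Complex.conj_I)
  have hmemv : ∀ t : ℝ, v t ∈ unitary 𝔄 := by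
    intro t
    have h1 : t • (-X) = Complex.I • (((-t : ℝ) : ℂ) • A) := by
      rw [hX, smul_neg, ← neg_smul, smul_comm, RCLike.real_smul_eq_coe_smul (K := ℂ)]
      norm_cast
    have h2 : IsSelfAdjoint ((((-t : ℝ)) : ℂ) • A) := by
      refine IsSelfAdjoint.smul ?_ hA
      simp [IsSelfAdjoint, RCLike.star_def]
    rw [hv]
    simp only
    rw [h1]
    exact exp_mem_unitary_of_mem_skewAdjoint (h2.smul_mem_skewAdjoint Complex.conj_I)
  have hnu : ∀ t : ℝ, ‖u t‖ = 1 := fun t => CStarRing.norm_of_mem_unitary (hmemu t)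
  have hnv : ∀ t : ℝ, ‖v t‖ = 1 := fun t => CStarRing.norm_of_mem_unitary (hmemv t)
  -- derivative of f
  set f : ℝ → 𝔄 := fun t => u t * C * v t with hf
  have hcomm : ∀ t : ℝ, Commute X (v t) := by
    intro t
    exact (((Commute.refl X).neg_right).smul_right t).exp_right
  have hderiv : ∀ t : ℝ, HasDerivAt f (u t * D * v t) t := by
    intro t
    have h1 : HasDerivAt u (u t * X) t := hasDerivAt_exp_smul_const X t
    have h2 : HasDerivAt v (v t * (-X)) t := hasDerivAt_exp_smul_const (-X) t
    have h3 := (h1.mul_const C).mul h2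
    convert h3 using 1
    · rfl
    have h4 : v t * -X = -X * v t := ((hcomm t).neg_left).symm.eq
    rw [h4, hD]
    noncomm_ring
  -- bound on the derivative
  have hbound : ∀ t : ℝ, ‖u t * D * v t‖ ≤ ‖D‖ := by
    intro t
    calc ‖u t * D * v t‖ ≤ ‖u t * D‖ * ‖v t‖ := norm_mul_le _ _
      _ ≤ ‖u t‖ * ‖D‖ * ‖v t‖ := by gcongr; exact norm_mul_le _ _
      _ = ‖D‖ := by rw [hnu, hnv]; ring
  -- mean value inequality
  have hmv : ‖f 1 - f 0‖ ≤ ‖D‖ * ‖(1 : ℝ) - 0‖ := by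
    refine (convex_univ : Convex ℝ (Set.univ : Set ℝ)).norm_image_sub_le_of_norm_hasDerivWithin_le
      (fun t _ => (hderiv t).hasDerivWithinAt) (fun t _ => hbound t) trivial trivial
  have hmv' : ‖f 1 - f 0‖ ≤ ‖D‖ := by simpa using hmv
  -- rewrite the goal
  have hvu : v 1 * u 1 = 1 := by
    rw [hu, hv]
    simp only [one_smul]
    rw [← NormedSpace.exp_add_of_commute ((Commute.refl X).neg_left)]
    simp
  have hf0 : f 0 = C := by
    simp [hf, hu, hv, NormedSpace.exp_zero]
  have hu1 : u 1 = NormedSpace.exp X := by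
    rw [hu]
    simp only [one_smul]
  have hkey : NormedSpace.exp X * C - C * NormedSpace.exp X = (f 1 - f 0) * u 1 := by
    rw [hf0, hf]
    simp only
    rw [sub_mul, mul_assoc (u 1 * C), hvu, mul_one, hu1]
  have hDnorm : ‖D‖ = ‖A * C - C * A‖ := by
    rw [hD, hX, smul_mul_assoc, mul_smul_comm, ← smul_sub, norm_smul]
    simp
  calc ‖NormedSpace.exp (Complex.I • A) * C - C * NormedSpace.exp (Complex.I • A)‖
      = ‖(f 1 - f 0) * u 1‖ := by rw [← hkey]
    _ ≤ ‖f 1 - f 0‖ * ‖u 1‖ := norm_mul_le _ _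
    _ = ‖f 1 - f 0‖ := by rw [hnu]; ring
    _ ≤ ‖D‖ := hmv'
    _ = ‖A * C - C * A‖ := hDnorm
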